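/- Let ω : [0,∞) → [0,∞) be a modulus of continuity (continuous, nondecreasing, ω(0)=0), and let u, v : ℝⁿ × [0,∞) → ℝ be bounded functions such that for every ε > 0 there is δ > 0 with u(x,t) ≤ v(y,s) + ε whenever |x-y| < δ and |t|, |s| < δ. Then for ε > 0 small, the sup-convolution u^ε and inf-convolution v_ε satisfy u^ε(x,0) ≤ v_ε(x,0) + ω̃(ε) for all x ∈ ℝⁿ, for some modulus of continuity ω̃ depending only on ω and the L^∞ bounds of u, v. -/
import Mathlib

set_option maxHeartbeats 1000000


open MeasureTheory Real

/-- If bounded `u, v` on `ℝⁿ × [0,∞)` satisfy the uniform ordering near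
`t = 0` (for every `ε > 0` there is `δ > 0` with `u(x,t) ≤ v(y,s) + ε` whenever
`|x-y| < δ`, `|t|,|s| < δ`), then the sup-convolution `u^ε` and inf-convolution `v_ε`
satisfy `u^ε(x,0) ≤ v_ε(x,0) + ω̃(ε)` for some modulus of continuity `ω̃`. -/
theorem stmt19 (n : ℕ) (u v : EuclideanSpace ℝ (Fin n) → ℝ → ℝ)
    (M : ℝ) (hM : 0 < M) (hu_bd : ∀ x t, |u x t| ≤ M) (hv_bd : ∀ x t, |v x t| ≤ M)
    (horder : ∀ ε > (0:ℝ), ∃ δ > (0:ℝ), ∀ x y t s, ‖x - y‖ < δ → |t| < δ → |s| < δ →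
        0 ≤ t → 0 ≤ s → u x t ≤ v y s + ε)
    (ue ve : ℝ → EuclideanSpace ℝ (Fin n) → ℝ → ℝ)
    (hue : ∀ ε, 0 < ε → ∀ x t, ue ε x t =
        sSup { a : ℝ | ∃ y : EuclideanSpace ℝ (Fin n), ∃ s : ℝ, 0 ≤ s ∧
            a = u y s - (‖x - y‖ ^ 2 + (t - s) ^ 2) / ε })
    (hve : ∀ ε, 0 < ε → ∀ x t, ve ε x t =
        sInf { a : ℝ | ∃ y : EuclideanSpace ℝ (Fin n), ∃ s : ℝ, 0 ≤ s ∧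
            a = v y s + (‖x - y‖ ^ 2 + (t - s) ^ 2) / ε }) :
    ∃ ω : ℝ → ℝ, Continuous ω ∧ Monotone ω ∧ ω 0 = 0 ∧
      ∃ ε₀ > (0:ℝ), ∀ ε, 0 < ε → ε < ε₀ →
        ∀ x, ue ε x 0 ≤ ve ε x 0 + ω ε := by
  -- uniform bounds on the convolutions
  have hue_le : ∀ ε, 0 < ε → ∀ x, ue ε x 0 ≤ M := by
    intro ε hε x
    rw [hue ε hε]
    refine Real.sSup_le ?_ hM.le
    rintro a ⟨y, s, hs, rfl⟩
    have h1 := (abs_le.mp (hu_bd y s)).2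
    have h0 : 0 ≤ (‖x - y‖ ^ 2 + ((0:ℝ) - s) ^ 2) / ε := by positivity
    linarith
  have hve_ge : ∀ ε, 0 < ε → ∀ x, -M ≤ ve ε x 0 := by
    intro ε hε x
    rw [hve ε hε]
    refine le_csInf ⟨v x 0 + (‖x - x‖ ^ 2 + ((0:ℝ) - 0) ^ 2) / ε, x, 0, le_refl 0, rfl⟩ ?_
    rintro b ⟨y, s, hs, rfl⟩
    have h1 := (abs_le.mp (hv_bd y s)).1
    have h0 : 0 ≤ (‖x - y‖ ^ 2 + ((0:ℝ) - s) ^ 2) / ε := by positivity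
    linarith
  -- the key quantitative comparison
  have key : ∀ c : ℝ, 0 < c → ∃ τ, 0 < τ ∧ ∀ ε, 0 < ε → ε < τ →
      ∀ x, ue ε x 0 ≤ ve ε x 0 + c := by
    intro c hc
    obtain ⟨δ, hδ, hord⟩ := horder c hc
    refine ⟨(δ/2)^2/(2*M), by positivity, ?_⟩
    intro ε hε hετ x
    have hQ : ε * (2*M) < (δ/2)^2 := (lt_div_iff₀ (by positivity)).mp hετ
    rw [hue ε hε, hve ε hε]
    have hAne : (u x 0 - (‖x - x‖ ^ 2 + ((0:ℝ) - 0) ^ 2) / ε) ∈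
        { a : ℝ | ∃ y : EuclideanSpace ℝ (Fin n), ∃ s : ℝ, 0 ≤ s ∧
            a = u y s - (‖x - y‖ ^ 2 + ((0:ℝ) - s) ^ 2) / ε } := ⟨x, 0, le_refl 0, rfl⟩
    have hBne : (v x 0 + (‖x - x‖ ^ 2 + ((0:ℝ) - 0) ^ 2) / ε) ∈
        { a : ℝ | ∃ y : EuclideanSpace ℝ (Fin n), ∃ s : ℝ, 0 ≤ s ∧
            a = v y s + (‖x - y‖ ^ 2 + ((0:ℝ) - s) ^ 2) / ε } := ⟨x, 0, le_refl 0, rfl⟩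
    have hkey : ∀ y s, 0 ≤ s → ∀ y' s', 0 ≤ s' →
        u y s - (‖x - y‖ ^ 2 + ((0:ℝ) - s) ^ 2) / ε ≤
        (v y' s' + (‖x - y'‖ ^ 2 + ((0:ℝ) - s') ^ 2) / ε) + c := by
      intro y s hs y' s' hs'
      set P := ‖x - y‖ ^ 2 + ((0:ℝ) - s) ^ 2 with hPdef
      set P' := ‖x - y'‖ ^ 2 + ((0:ℝ) - s') ^ 2 with hP'def
      have hP0 : 0 ≤ P := by positivity
      have hP'0 : 0 ≤ P' := by positivity
      have hPe : 0 ≤ P / ε := by positivity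
      have hP'e : 0 ≤ P' / ε := by positivity
      have hsq : ((0:ℝ) - s)^2 = s^2 := by ring
      have hsq' : ((0:ℝ) - s')^2 = s'^2 := by ring
      have huM := abs_le.mp (hu_bd y s)
      have hvM := abs_le.mp (hv_bd y' s')
      by_cases h1 : P < (δ/2)^2
      · by_cases h2 : P' < (δ/2)^2
        · have hn1 : ‖x - y‖ ^ 2 < (δ/2)^2 := by
            have := sq_nonneg ((0:ℝ) - s); linarith
          have hn2 : ‖x - y'‖ ^ 2 < (δ/2)^2 := by
            have := sq_nonneg ((0:ℝ) - s'); linarith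
          have hns : s ^ 2 < (δ/2)^2 := by
            have := sq_nonneg ‖x - y‖; linarith [hsq]
          have hns' : s' ^ 2 < (δ/2)^2 := by
            have := sq_nonneg ‖x - y'‖; linarith [hsq']
          have hδ2 : (0:ℝ) ≤ δ/2 := by linarith
          have hxy : ‖x - y‖ < δ/2 := lt_of_pow_lt_pow_left₀ 2 hδ2 hn1
          have hxy' : ‖x - y'‖ < δ/2 := lt_of_pow_lt_pow_left₀ 2 hδ2 hn2
          have hss : s < δ/2 := lt_of_pow_lt_pow_left₀ 2 hδ2 hns
          have hss' : s' < δ/2 := lt_of_pow_lt_pow_left₀ 2 hδ2 hns'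
          have hyy : ‖y - y'‖ < δ := by
            have hsplit : y - y' = (y - x) + (x - y') := by abel
            calc ‖y - y'‖ ≤ ‖y - x‖ + ‖x - y'‖ := by rw [hsplit]; exact norm_add_le _ _
            _ = ‖x - y‖ + ‖x - y'‖ := by rw [norm_sub_rev]
            _ < δ := by linarith
          have h3 := hord y y' s s' hyy (by rw [abs_of_nonneg hs]; linarith)
            (by rw [abs_of_nonneg hs']; linarith) hs hs'
          linarith
        · push_neg at h2
          have h3 : 2*M < P' / ε := by
            rw [lt_div_iff₀ hε]; nlinarith
          linarith
      · push_neg at h1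
        have h3 : 2*M < P / ε := by
          rw [lt_div_iff₀ hε]; nlinarith
        linarith
    have h1 : ∀ b ∈ { a : ℝ | ∃ y : EuclideanSpace ℝ (Fin n), ∃ s : ℝ, 0 ≤ s ∧
            a = v y s + (‖x - y‖ ^ 2 + ((0:ℝ) - s) ^ 2) / ε },
        sSup { a : ℝ | ∃ y : EuclideanSpace ℝ (Fin n), ∃ s : ℝ, 0 ≤ s ∧
            a = u y s - (‖x - y‖ ^ 2 + ((0:ℝ) - s) ^ 2) / ε } ≤ b + c := by
      rintro b ⟨y', s', hs', rfl⟩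
      refine csSup_le ⟨_, hAne⟩ ?_
      rintro a ⟨y, s, hs, rfl⟩
      exact hkey y s hs y' s' hs'
    have h2 : sSup { a : ℝ | ∃ y : EuclideanSpace ℝ (Fin n), ∃ s : ℝ, 0 ≤ s ∧
            a = u y s - (‖x - y‖ ^ 2 + ((0:ℝ) - s) ^ 2) / ε } - c ≤
        sInf { a : ℝ | ∃ y : EuclideanSpace ℝ (Fin n), ∃ s : ℝ, 0 ≤ s ∧
            a = v y s + (‖x - y‖ ^ 2 + ((0:ℝ) - s) ^ 2) / ε } := by
      refine le_csInf ⟨_, hBne⟩ ?_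
      intro b hb
      linarith [h1 b hb]
    linarith
  -- choose a threshold function
  obtain ⟨T, hT⟩ : ∃ T : ℝ → ℝ, ∀ c, 0 < c → 0 < T c ∧ ∀ ε, 0 < ε → ε < T c →
      ∀ x, ue ε x 0 ≤ ve ε x 0 + c := by
    choose T h1 h2 using key
    refine ⟨fun c => if h : 0 < c then T c h else 1, ?_⟩
    intro c hc
    simp only [dif_pos hc]
    exact ⟨h1 c hc, h2 c hc⟩
  -- define the modulus
  set S : ℝ → Set ℝ := fun t => {z | ∃ c, 0 < c ∧ z = c + 2*M*(max t 0) / T c} with hSdef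
  set ω : ℝ → ℝ := fun t => sInf (S t) with hωdef
  have hmem : ∀ t c, 0 < c → (c + 2*M*(max t 0) / T c) ∈ S t := by
    intro t c hc; exact ⟨c, hc, rfl⟩
  have hSne : ∀ t, (S t).Nonempty := fun t => ⟨_, hmem t 1 one_pos⟩
  have hz0 : ∀ t z, z ∈ S t → 0 ≤ z := by
    rintro t z ⟨c, hc, rfl⟩
    have h1 : 0 ≤ 2*M*(max t 0) / T c :=
      div_nonneg (mul_nonneg (by linarith) (le_max_right t 0)) (hT c hc).1.le
    linarith
  have hSbdd : ∀ t, BddBelow (S t) := fun t => ⟨0, fun z hz => hz0 t z hz⟩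
  have hωle : ∀ t c, 0 < c → ω t ≤ c + 2*M*(max t 0) / T c :=
    fun t c hc => csInf_le (hSbdd t) (hmem t c hc)
  have hωnn : ∀ t, 0 ≤ ω t := fun t => le_csInf (hSne t) (hz0 t)
  have hωnonpos : ∀ t, t ≤ 0 → ω t = 0 := by
    intro t ht
    refine le_antisymm ?_ (hωnn t)
    refine le_of_forall_pos_le_add ?_
    intro c hc
    have := hωle t c hc
    rw [max_eq_right ht] at this
    simpa using this
  have hmono : Monotone ω := by
    intro t₁ t₂ h12
    refine le_csInf (hSne t₂) ?_
    rintro z ⟨c, hc, rfl⟩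
    refine le_trans (hωle t₁ c hc) ?_
    have : max t₁ 0 ≤ max t₂ 0 := max_le_max h12 (le_refl 0)
    gcongr
    exact (hT c hc).1.le
  -- upper semicontinuity estimate
  have hU : ∀ t₀ η, 0 < η → ∃ d > (0:ℝ), ∀ t, |t - t₀| < d → ω t ≤ ω t₀ + η := by
    intro t₀ η hη
    obtain ⟨z, hzS, hzlt⟩ := exists_lt_of_csInf_lt (hSne t₀) (by linarith [hωnn t₀] :
      sInf (S t₀) < ω t₀ + η/2)
    obtain ⟨c, hc, rfl⟩ := hzS
    have hTc := (hT c hc).1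
    refine ⟨η * T c / (4*M), by positivity, ?_⟩
    intro t ht
    have hmax : max t 0 ≤ max t₀ 0 + |t - t₀| := by
      have := abs_max_sub_max_le_abs t t₀ 0
      have h2 := (abs_le.mp this).2
      linarith [le_abs_self (max t 0 - max t₀ 0)]
    have hstep : 2*M*(max t 0) / T c ≤ 2*M*(max t₀ 0) / T c + η/2 := by
      have h1 : 2*M*(max t 0) ≤ 2*M*(max t₀ 0) + 2*M*(η * T c / (4*M)) := by
        nlinarith [abs_nonneg (t - t₀)]
      have h2 : 2*M*(η * T c / (4*M)) / T c = η/2 := by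
        field_simp
        ring
      calc 2*M*(max t 0) / T c ≤ (2*M*(max t₀ 0) + 2*M*(η * T c / (4*M))) / T c := by gcongr
        _ = 2*M*(max t₀ 0) / T c + 2*M*(η * T c / (4*M)) / T c := by rw [add_div]
        _ = 2*M*(max t₀ 0) / T c + η/2 := by rw [h2]
    calc ω t ≤ c + 2*M*(max t 0) / T c := hωle t c hc
      _ ≤ (c + 2*M*(max t₀ 0) / T c) + η/2 := by linarith
      _ ≤ ω t₀ + η := by linarith
  -- concavity on nonnegative reals
  have hConc : ∀ a b l : ℝ, 0 ≤ a → 0 ≤ b → 0 ≤ l → l ≤ 1 →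
      l * ω a + (1-l) * ω b ≤ ω (l*a + (1-l)*b) := by
    intro a b l ha hb hl0 hl1
    refine le_csInf (hSne _) ?_
    rintro z ⟨c, hc, rfl⟩
    have hTc := (hT c hc).1
    have hma : max a 0 = a := max_eq_left ha
    have hmb : max b 0 = b := max_eq_left hb
    have hmm : max (l*a + (1-l)*b) 0 = l*a + (1-l)*b :=
      max_eq_left (by nlinarith)
    have h3 := hωle a c hc
    have h4 := hωle b c hc
    rw [hma] at h3; rw [hmb] at h4; rw [hmm]
    have h5 := mul_le_mul_of_nonneg_left h3 hl0
    have h6 := mul_le_mul_of_nonneg_left h4 (by linarith : (0:ℝ) ≤ 1 - l)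
    have heq : l * (c + 2*M*a / T c) + (1-l) * (c + 2*M*b / T c)
        = c + 2*M*(l*a + (1-l)*b) / T c := by
      field_simp
      ring
    linarith
  -- continuity
  have hcont : Continuous ω := by
    rw [continuous_iff_continuousAt]
    intro t₀
    rw [Metric.continuousAt_iff]
    intro η hη
    obtain ⟨d, hd, hdprop⟩ := hU t₀ (η/2) (by linarith)
    rcases lt_trichotomy t₀ 0 with h0 | h0 | h0
    · refine ⟨-t₀, by linarith, ?_⟩
      intro t ht
      rw [Real.dist_eq] at ht
      have ht0 : t ≤ 0 := by
        have := (abs_lt.mp ht).2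
        linarith
      rw [Real.dist_eq, hωnonpos t ht0, hωnonpos t₀ h0.le]
      simpa using hη
    · refine ⟨d, hd, ?_⟩
      intro t ht
      rw [Real.dist_eq] at ht ⊢
      subst h0
      have h1 := hdprop t ht
      rw [hωnonpos 0 (le_refl 0)] at h1 ⊢
      rw [abs_of_nonneg (by simpa using hωnn t)]
      simpa using lt_of_le_of_lt (by simpa using h1) (by linarith)
    · refine ⟨min (min d (t₀/2)) (η*t₀/(4*(ω t₀+1))), ?_, ?_⟩
      · have hB := hωnn t₀
        refine lt_min (lt_min hd (by linarith)) (by positivity)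
      intro t ht
      rw [Real.dist_eq] at ht ⊢
      have htd : |t - t₀| < d := lt_of_lt_of_le ht ((min_le_left _ _).trans (min_le_left _ _))
      have htt : |t - t₀| < t₀/2 := lt_of_lt_of_le ht ((min_le_left _ _).trans (min_le_right _ _))
      have hte : |t - t₀| < η*t₀/(4*(ω t₀+1)) := lt_of_lt_of_le ht (min_le_right _ _)
      have htpos : 0 < t := by
        have := (abs_lt.mp htt).1
        linarith
      rcases le_or_gt t₀ t with hle | hlt
      · have h1 : ω t₀ ≤ ω t := hmono hle
        have h2 := hdprop t htd
        rw [abs_of_nonneg (by linarith)]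
        linarith
      · -- t < t₀ : use concavity with anchor t₀/2
        have hB := hωnn t₀
        have hμ : 0 < t₀ - t := by linarith
        have hμ2 : t₀ - t < t₀/2 := lt_of_le_of_lt (le_abs_self _) (by rwa [abs_sub_comm] at htt)
        set l : ℝ := 2*(t₀ - t)/t₀ with hldef
        have hl0 : 0 ≤ l := by positivity
        have hl1 : l ≤ 1 := by
          rw [hldef, div_le_one h0]; linarith
        have hlt0 : l * t₀ = 2*(t₀ - t) := by
          rw [hldef]; field_simp
        have harg : l*(t₀/2) + (1-l)*t₀ = t := by nlinarith [hlt0]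
        have hc2 := hConc (t₀/2) t₀ l (by linarith) h0.le hl0 hl1
        rw [harg] at hc2
        have h7 : (t₀ - t) * (4*(ω t₀+1)) < η*t₀ := by
          have h8 : t₀ - t < η*t₀/(4*(ω t₀+1)) :=
            lt_of_le_of_lt (le_abs_self _) (by rwa [abs_sub_comm] at hte)
          rw [lt_div_iff₀ (by positivity)] at h8
          linarith
        have h9 : l * ω t₀ < η/2 := by
          rw [hldef, div_mul_eq_mul_div, div_lt_iff₀ h0]
          nlinarith
        have h10 : 0 ≤ l * ω (t₀/2) := mul_nonneg hl0 (hωnn _)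
        have h5 : ω t ≤ ω t₀ := hmono hlt.le
        rw [abs_lt]
        constructor <;> nlinarith
  refine ⟨ω, hcont, hmono, hωnonpos 0 (le_refl 0), 1, one_pos, ?_⟩
  -- main estimate
  intro ε hε _ x
  have h2M : ue ε x 0 - ve ε x 0 ≤ 2*M := by
    have := hue_le ε hε x
    have := hve_ge ε hε x
    linarith
  have hmax : max ε 0 = ε := max_eq_left hε.le
  have : ue ε x 0 - ve ε x 0 ≤ ω ε := by
    refine le_csInf (hSne ε) ?_
    rintro z ⟨c, hc, rfl⟩
    rw [hmax]
    have hTc := (hT c hc).1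
    rcases lt_or_ge ε (T c) with hlt | hge
    · have h1 := (hT c hc).2 ε hε hlt x
      have h2 : 0 ≤ 2*M*ε / T c := by positivity
      linarith
    · have h1 : 2*M ≤ 2*M*ε / T c := by
        rw [le_div_iff₀ hTc]
        nlinarith
      linarith
  linarith
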